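/- Under the minimal key consumption conditions (I(U;X)=I(U;R)=I(X;R)=0, H(U|XR)=0), both H(X) and H(R) are at least h(π⌊1/π⌋) + π⌊1/π⌋·log⌊1/π⌋ ≥ log(1/π), where π = min_{u∈𝒰} P_U(u) and h is the binary entropy function; the two bounds coincide iff 1/π is an integer. -/

import Mathlib

/-- Shannon entropy of a finitely supported probability mass function. -/
noncomputable def ent {α : Type*} [Fintype α] (q : α → ℝ) : ℝ :=
  ∑ a, Real.negMulLog (q a)

/-- Binary entropy function, with the convention `h(0) = h(1) = 0`. -/
noncomputable def binEnt (γ : ℝ) : ℝ :=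
  Real.negMulLog γ + Real.negMulLog (1 - γ)

open Finset

private lemma chord1 {x y : ℝ} (hx : 0 ≤ x) (hxy : x ≤ y) :
    x * (-Real.log y) ≤ Real.negMulLog x := by
  rcases eq_or_lt_of_le hx with h | h
  · simp [← h, Real.negMulLog]
  · have hlog : Real.log x ≤ Real.log y := Real.log_le_log h hxy
    unfold Real.negMulLog
    nlinarith

private lemma chord2 {d c x : ℝ} (hd : 0 ≤ d) (hdc : d < c) (h1 : d ≤ x) (h2 : x ≤ c) :
    Real.negMulLog d + (Real.negMulLog c - Real.negMulLog d) / (c - d) * (x - d)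
      ≤ Real.negMulLog x := by
  have hcd : (0:ℝ) < c - d := by linarith
  have ha : 0 ≤ (c - x) / (c - d) := div_nonneg (by linarith) hcd.le
  have hb : 0 ≤ (x - d) / (c - d) := div_nonneg (by linarith) hcd.le
  have hab : (c - x) / (c - d) + (x - d) / (c - d) = 1 := by field_simp; ring
  have hcomb := Real.concaveOn_negMulLog.2 (Set.mem_Ici.2 hd)
    (Set.mem_Ici.2 (hd.trans hdc.le)) ha hb hab
  simp only [smul_eq_mul] at hcomb
  have hxeq : (c - x) / (c - d) * d + (x - d) / (c - d) * c = x := by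
    field_simp; ring
  rw [hxeq] at hcomb
  have : (c - x) / (c - d) * Real.negMulLog d + (x - d) / (c - d) * Real.negMulLog c
      = Real.negMulLog d + (Real.negMulLog c - Real.negMulLog d) / (c - d) * (x - d) := by
    field_simp; ring
  linarith [this ▸ hcomb]

private lemma sum_min_ge {α : Type*} [Fintype α] (q : α → ℝ) (π δ : ℝ) (m : ℕ)
    (hq0 : ∀ a, 0 ≤ q a) (hqπ : ∀ a, q a ≤ π) (hq1 : ∑ a, q a = 1)
    (hδ0 : 0 ≤ δ) (hδπ : δ ≤ π) (hδ : δ = 1 - m * π) :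
    ((m:ℝ) + 1) * δ ≤ ∑ a, min (q a) δ := by
  classical
  set T := Finset.univ.filter (fun a => δ < q a) with hT
  have hsplit : ∑ a, min (q a) δ
      = ∑ a ∈ T, δ + ∑ a ∈ Finset.univ.filter (fun a => ¬ δ < q a), q a := by
    rw [← Finset.sum_filter_add_sum_filter_not Finset.univ (fun a => δ < q a)]
    congr 1
    · exact Finset.sum_congr rfl fun a ha => min_eq_right (Finset.mem_filter.1 ha).2.le
    · exact Finset.sum_congr rfl fun a ha =>
        min_eq_left (not_lt.1 (Finset.mem_filter.1 ha).2)
  have hqsplit : ∑ a ∈ T, q a + ∑ a ∈ Finset.univ.filter (fun a => ¬ δ < q a), q a = 1 := by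
    rw [Finset.sum_filter_add_sum_filter_not Finset.univ (fun a => δ < q a), hq1]
  have hTbound : ∑ a ∈ T, q a ≤ (T.card : ℝ) * π := by
    have := Finset.sum_le_card_nsmul T q π (fun a _ => hqπ a)
    simpa [nsmul_eq_mul] using this
  have hnneg : 0 ≤ ∑ a ∈ Finset.univ.filter (fun a => ¬ δ < q a), q a :=
    Finset.sum_nonneg fun a _ => hq0 a
  have hδsum : ∑ a ∈ T, δ = (T.card : ℝ) * δ := by
    rw [Finset.sum_const, nsmul_eq_mul]
  by_cases hc : T.card ≤ m
  · have hc' : (T.card : ℝ) ≤ (m : ℝ) := by exact_mod_cast hc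
    rw [hsplit, hδsum]
    nlinarith [mul_le_mul_of_nonneg_right hc' (sub_nonneg.2 hδπ)]
  · have hc' : (m : ℝ) + 1 ≤ (T.card : ℝ) := by
      have : m + 1 ≤ T.card := Nat.succ_le_of_lt (not_le.1 hc)
      exact_mod_cast this
    rw [hsplit, hδsum]
    nlinarith

private lemma entropy_lower {α : Type*} [Fintype α] (q : α → ℝ) (π : ℝ)
    (hπ0 : 0 < π) (hπ1 : π ≤ 1)
    (hq0 : ∀ a, 0 ≤ q a) (hqπ : ∀ a, q a ≤ π) (hq1 : ∑ a, q a = 1) :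
    binEnt (π * ⌊1 / π⌋₊) + π * ⌊1 / π⌋₊ * Real.log ⌊1 / π⌋₊ ≤ ent q := by
  classical
  set m : ℕ := ⌊1 / π⌋₊ with hm
  have hm1 : 1 ≤ m := Nat.le_floor (by rw [Nat.cast_one, le_div_iff₀ hπ0]; linarith)
  have hM1 : (1:ℝ) ≤ (m:ℝ) := by exact_mod_cast hm1
  have hMle : (m:ℝ) ≤ 1 / π := Nat.floor_le (by positivity)
  have hMπ : (m:ℝ) * π ≤ 1 := by
    rw [le_div_iff₀ hπ0] at hMle; linarith
  have hlt : 1 / π < (m:ℝ) + 1 := by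
    have := Nat.lt_floor_add_one (1 / π); push_cast at this ⊢; linarith
  have hMπ' : 1 < ((m:ℝ) + 1) * π := by
    rw [div_lt_iff₀ hπ0] at hlt; linarith
  obtain ⟨δ, hδdef⟩ : ∃ δ : ℝ, δ = 1 - (m:ℝ) * π := ⟨_, rfl⟩
  have hδ0 : 0 ≤ δ := by rw [hδdef]; linarith
  have hδπ : δ < π := by rw [hδdef]; nlinarith
  have hD : (0:ℝ) < π - δ := by linarith
  have hVal : binEnt (π * (m:ℝ)) + π * (m:ℝ) * Real.log (m:ℝ)
      = -((m:ℝ) * π) * Real.log π + Real.negMulLog δ := by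
    have hlogmul : Real.log (π * (m:ℝ)) = Real.log π + Real.log (m:ℝ) :=
      Real.log_mul (ne_of_gt hπ0) (by linarith)
    have h1 : (1:ℝ) - π * (m:ℝ) = δ := by rw [hδdef]; ring
    simp only [binEnt, h1, Real.negMulLog, hlogmul]
    ring
  rw [hVal, ent]
  rcases eq_or_lt_of_le hδ0 with hδz | hδpos
  · -- δ = 0 : simple chord bound suffices
    have hMπ1 : (m:ℝ) * π = 1 := by rw [hδdef] at hδz; linarith
    have hpt : ∀ a ∈ Finset.univ, q a * (-Real.log π) ≤ Real.negMulLog (q a) :=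
      fun a _ => chord1 (hq0 a) (hqπ a)
    have hsum := Finset.sum_le_sum hpt
    rw [← Finset.sum_mul, hq1, one_mul] at hsum
    rw [← hδz, Real.negMulLog_zero, hMπ1]
    linarith
  · -- δ > 0 : two-chord bound
    obtain ⟨s1, hs1⟩ : ∃ s : ℝ, s = -Real.log δ := ⟨_, rfl⟩
    obtain ⟨s2, hs2⟩ : ∃ s : ℝ, s = (Real.negMulLog π - Real.negMulLog δ) / (π - δ) := ⟨_, rfl⟩
    have hs12 : 0 ≤ s1 - s2 := by
      have key : s1 - s2 = π * (Real.log π - Real.log δ) / (π - δ) := by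
        rw [hs1, hs2]
        simp only [Real.negMulLog]
        field_simp
        ring
      rw [key]
      have : Real.log δ ≤ Real.log π := Real.log_le_log hδpos hδπ.le
      exact div_nonneg (by nlinarith) (by linarith)
    have hpt : ∀ a ∈ Finset.univ,
        s2 * q a + (s1 - s2) * min (q a) δ ≤ Real.negMulLog (q a) := by
      intro a _
      by_cases h : q a ≤ δ
      · rw [min_eq_left h]
        have h1 := chord1 (hq0 a) h
        have heq : s2 * q a + (s1 - s2) * q a = q a * s1 := by ring
        rw [heq, hs1]
        exact h1
      · push_neg at h
        rw [min_eq_right h.le]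
        have h2 := chord2 hδ0 hδπ h.le (hqπ a)
        have heq : s2 * q a + (s1 - s2) * δ
            = Real.negMulLog δ + (Real.negMulLog π - Real.negMulLog δ) / (π - δ) * (q a - δ) := by
          rw [hs1, hs2]
          simp only [Real.negMulLog]
          field_simp
          ring
        rw [heq]
        exact h2
    have hsum := Finset.sum_le_sum hpt
    have hexp : ∑ a, (s2 * q a + (s1 - s2) * min (q a) δ)
        = s2 * (∑ a, q a) + (s1 - s2) * ∑ a, min (q a) δ := by
      rw [Finset.sum_add_distrib, ← Finset.mul_sum, ← Finset.mul_sum]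
    rw [hexp, hq1, mul_one] at hsum
    have hmin := sum_min_ge q π δ m hq0 hqπ hq1 hδ0 hδπ.le hδdef
    have hmin' : (s1 - s2) * (((m:ℝ) + 1) * δ) ≤ (s1 - s2) * ∑ a, min (q a) δ :=
      mul_le_mul_of_nonneg_left hmin hs12
    have hfin : s2 + (s1 - s2) * (((m:ℝ) + 1) * δ)
        = -((m:ℝ) * π) * Real.log π + Real.negMulLog δ := by
      have hMπδ : (m:ℝ) * π = 1 - δ := by rw [hδdef]; ring
      rw [hs1, hs2]
      simp only [Real.negMulLog]
      field_simp
      linear_combination (π * Real.log π - δ * Real.log δ) * hMπδ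
    linarith

private lemma part34 (π : ℝ) (hπ0 : 0 < π) (hπ1 : π ≤ 1) :
    (Real.log (1 / π)
        ≤ binEnt (π * ⌊1 / π⌋₊) + π * ⌊1 / π⌋₊ * Real.log ⌊1 / π⌋₊)
    ∧ (binEnt (π * ⌊1 / π⌋₊) + π * ⌊1 / π⌋₊ * Real.log ⌊1 / π⌋₊
        = Real.log (1 / π) ↔ ∃ n : ℕ, 1 / π = (n : ℝ)) := by
  set m : ℕ := ⌊1 / π⌋₊ with hm
  have hm1 : 1 ≤ m := Nat.le_floor (by rw [Nat.cast_one, le_div_iff₀ hπ0]; linarith)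
  have hM1 : (1:ℝ) ≤ (m:ℝ) := by exact_mod_cast hm1
  have hMle : (m:ℝ) ≤ 1 / π := Nat.floor_le (by positivity)
  have hMπ : (m:ℝ) * π ≤ 1 := by rw [le_div_iff₀ hπ0] at hMle; linarith
  have hlt : 1 / π < (m:ℝ) + 1 := by
    have := Nat.lt_floor_add_one (1 / π); push_cast at this ⊢; linarith
  have hMπ' : 1 < ((m:ℝ) + 1) * π := by rw [div_lt_iff₀ hπ0] at hlt; linarith
  obtain ⟨δ, hδdef⟩ : ∃ δ : ℝ, δ = 1 - (m:ℝ) * π := ⟨_, rfl⟩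
  have hδ0 : 0 ≤ δ := by rw [hδdef]; linarith
  have hδπ : δ < π := by rw [hδdef]; nlinarith
  have hVal : binEnt (π * (m:ℝ)) + π * (m:ℝ) * Real.log (m:ℝ)
      = -((m:ℝ) * π) * Real.log π + Real.negMulLog δ := by
    have hlogmul : Real.log (π * (m:ℝ)) = Real.log π + Real.log (m:ℝ) :=
      Real.log_mul (ne_of_gt hπ0) (by linarith)
    have h1 : (1:ℝ) - π * (m:ℝ) = δ := by rw [hδdef]; ring
    simp only [binEnt, h1, Real.negMulLog, hlogmul]
    ring
  have hlog1π : Real.log (1 / π) = -Real.log π := by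
    rw [one_div, Real.log_inv]
  rw [hVal, hlog1π]
  rcases eq_or_lt_of_le hδ0 with hδz | hδpos
  · have hMπ1 : (m:ℝ) * π = 1 := by rw [hδdef] at hδz; linarith
    have heq : -((m:ℝ) * π) * Real.log π + Real.negMulLog δ = -Real.log π := by
      rw [← hδz, Real.negMulLog_zero, hMπ1]; ring
    refine ⟨le_of_eq heq.symm, ⟨fun _ => ⟨m, ?_⟩, fun _ => heq⟩⟩
    rw [div_eq_iff (ne_of_gt hπ0)]
    linarith
  · have hlog : Real.log δ < Real.log π := Real.log_lt_log hδpos hδπ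
    have hgt : -Real.log π < -((m:ℝ) * π) * Real.log π + Real.negMulLog δ := by
      have hMπδ : (m:ℝ) * π = 1 - δ := by rw [hδdef]; ring
      simp only [Real.negMulLog, hMπδ]
      nlinarith
    refine ⟨hgt.le, ⟨fun h => absurd h (ne_of_gt hgt), fun ⟨n, hn⟩ => ?_⟩⟩
    exfalso
    have hmn : m = n := by rw [hm, hn, Nat.floor_natCast]
    have : (m:ℝ) * π = 1 := by
      rw [hmn, ← hn]; field_simp
    rw [hδdef] at hδpos; linarith

/-- Under the minimal key consumption conditions
(`I(U;X) = I(U;R) = I(X;R) = 0`, `H(U|XR) = 0`), both `H(X)` and `H(R)` are at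
least `h(π⌊1/π⌋) + π⌊1/π⌋·log⌊1/π⌋ ≥ log(1/π)` where `π = min_{u∈𝒰} P_U(u)`,
and the two bounds coincide iff `1/π` is an integer. -/
theorem stmt_16 {𝒰 ℛ 𝒳 : Type*} [Fintype 𝒰] [Fintype ℛ] [Fintype 𝒳]
    (p : 𝒰 → ℛ → 𝒳 → ℝ)
    (hnn : ∀ u r x, 0 ≤ p u r x)
    (hsum : ∑ u, ∑ r, ∑ x, p u r x = 1)
    (hIUX : ∀ u x, (∑ r, p u r x)
      = (∑ r, ∑ x', p u r x') * (∑ u', ∑ r, p u' r x))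
    (hIUR : ∀ u r, (∑ x, p u r x)
      = (∑ r', ∑ x, p u r' x) * (∑ u', ∑ x, p u' r x))
    (hIXR : ∀ r x, (∑ u, p u r x)
      = (∑ u, ∑ x', p u r x') * (∑ u, ∑ r', p u r' x))
    (hdet : ∃ g : ℛ → 𝒳 → 𝒰, ∀ u r x, p u r x ≠ 0 → u = g r x)
    -- `π = min_{u ∈ 𝒰} P_U(u)` over the support `𝒰` of `U`
    (π : ℝ)
    (hπ₁ : ∀ u, (∑ r, ∑ x, p u r x) ≠ 0 → π ≤ ∑ r, ∑ x, p u r x)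
    (hπ₂ : ∃ u, (∑ r, ∑ x, p u r x) = π ∧ π ≠ 0) :
    (binEnt (π * ⌊1 / π⌋₊) + π * ⌊1 / π⌋₊ * Real.log ⌊1 / π⌋₊
        ≤ ent (fun x : 𝒳 => ∑ u, ∑ r, p u r x))
    ∧ (binEnt (π * ⌊1 / π⌋₊) + π * ⌊1 / π⌋₊ * Real.log ⌊1 / π⌋₊
        ≤ ent (fun r : ℛ => ∑ u, ∑ x, p u r x))
    ∧ (Real.log (1 / π)
        ≤ binEnt (π * ⌊1 / π⌋₊) + π * ⌊1 / π⌋₊ * Real.log ⌊1 / π⌋₊)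
    ∧ (binEnt (π * ⌊1 / π⌋₊) + π * ⌊1 / π⌋₊ * Real.log ⌊1 / π⌋₊
        = Real.log (1 / π) ↔ ∃ n : ℕ, 1 / π = (n : ℝ)) := by
  classical
  obtain ⟨g, hg⟩ := hdet
  obtain ⟨u₀, hu₀, hπne⟩ := hπ₂
  have hπ0 : 0 < π := by
    rcases lt_or_eq_of_le (Finset.sum_nonneg fun r _ =>
        Finset.sum_nonneg fun x _ => hnn u₀ r x : 0 ≤ ∑ r, ∑ x, p u₀ r x) with h | h
    · rw [hu₀] at h; exact h
    · exact absurd (hu₀ ▸ h.symm) hπne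
  have hπ1 : π ≤ 1 := by
    rw [← hu₀, ← hsum]
    exact Finset.single_le_sum
      (f := fun u => ∑ r, ∑ x, p u r x)
      (fun u _ => Finset.sum_nonneg fun r _ => Finset.sum_nonneg fun x _ => hnn u r x)
      (Finset.mem_univ u₀)
  -- marginals sum to one
  have hsumX : ∑ x, ∑ u, ∑ r, p u r x = 1 := by
    rw [← hsum, Finset.sum_comm]
    exact Finset.sum_congr rfl fun u _ => Finset.sum_comm
  have hsumR : ∑ r, ∑ u, ∑ x, p u r x = 1 := by
    rw [← hsum, Finset.sum_comm]
  -- atom bound for X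
  have hXle : ∀ x, (∑ u, ∑ r, p u r x) ≤ π := by
    intro x
    have hPx0 : 0 ≤ ∑ u, ∑ r, p u r x :=
      Finset.sum_nonneg fun u _ => Finset.sum_nonneg fun r _ => hnn u r x
    rcases lt_or_eq_of_le hPx0 with hPx | hPx
    · have hUX : ∑ r, p u₀ r x = π * (∑ u, ∑ r, p u r x) := by
        rw [hIUX u₀ x, hu₀]
      have hpos : 0 < ∑ r, p u₀ r x := by rw [hUX]; exact mul_pos hπ0 hPx
      obtain ⟨r, -, hr⟩ := Finset.exists_ne_zero_of_sum_ne_zero (ne_of_gt hpos)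
      have hgeq : u₀ = g r x := hg u₀ r x hr
      have hsingle : ∑ u, p u r x = p u₀ r x :=
        Finset.sum_eq_single u₀
          (fun u _ hne => by
            by_contra h0
            exact hne ((hg u r x h0).trans hgeq.symm))
          (fun h => absurd (Finset.mem_univ _) h)
      have hXR : p u₀ r x = (∑ u, ∑ x', p u r x') * (∑ u, ∑ r', p u r' x) := by
        rw [← hsingle]; exact hIXR r x
      have hUR : ∑ x', p u₀ r x' = π * (∑ u', ∑ x', p u' r x') := by
        rw [hIUR u₀ r, hu₀]
      have hle : p u₀ r x ≤ ∑ x', p u₀ r x' :=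
        Finset.single_le_sum (fun x' _ => hnn u₀ r x') (Finset.mem_univ x)
      have hPR0 : 0 ≤ ∑ u, ∑ x', p u r x' :=
        Finset.sum_nonneg fun u _ => Finset.sum_nonneg fun x' _ => hnn u r x'
      have hpu : 0 < p u₀ r x := lt_of_le_of_ne (hnn u₀ r x) (Ne.symm hr)
      have hPRpos : 0 < ∑ u, ∑ x', p u r x' := by
        rcases lt_or_eq_of_le hPR0 with h | h
        · exact h
        · rw [hXR, ← h, zero_mul] at hpu; linarith
      have hkey : (∑ u, ∑ x', p u r x') * (∑ u, ∑ r', p u r' x)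
          ≤ π * (∑ u, ∑ x', p u r x') := by
        rw [← hXR, ← hUR] at *
        exact hle.trans (le_of_eq hUR)
      nlinarith [hkey, hPRpos]
    · rw [← hPx]; linarith
  -- atom bound for R
  have hRle : ∀ r, (∑ u, ∑ x, p u r x) ≤ π := by
    intro r
    have hPr0 : 0 ≤ ∑ u, ∑ x, p u r x :=
      Finset.sum_nonneg fun u _ => Finset.sum_nonneg fun x _ => hnn u r x
    rcases lt_or_eq_of_le hPr0 with hPr | hPr
    · have hUR : ∑ x, p u₀ r x = π * (∑ u, ∑ x, p u r x) := by
        rw [hIUR u₀ r, hu₀]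
      have hpos : 0 < ∑ x, p u₀ r x := by rw [hUR]; exact mul_pos hπ0 hPr
      obtain ⟨x, -, hx⟩ := Finset.exists_ne_zero_of_sum_ne_zero (ne_of_gt hpos)
      have hgeq : u₀ = g r x := hg u₀ r x hx
      have hsingle : ∑ u, p u r x = p u₀ r x :=
        Finset.sum_eq_single u₀
          (fun u _ hne => by
            by_contra h0
            exact hne ((hg u r x h0).trans hgeq.symm))
          (fun h => absurd (Finset.mem_univ _) h)
      have hXR : p u₀ r x = (∑ u, ∑ x', p u r x') * (∑ u, ∑ r', p u r' x) := by
        rw [← hsingle]; exact hIXR r x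
      have hUX : ∑ r', p u₀ r' x = π * (∑ u', ∑ r', p u' r' x) := by
        rw [hIUX u₀ x, hu₀]
      have hle : p u₀ r x ≤ ∑ r', p u₀ r' x :=
        Finset.single_le_sum (fun r' _ => hnn u₀ r' x) (Finset.mem_univ r)
      have hPX0 : 0 ≤ ∑ u, ∑ r', p u r' x :=
        Finset.sum_nonneg fun u _ => Finset.sum_nonneg fun r' _ => hnn u r' x
      have hpu : 0 < p u₀ r x := lt_of_le_of_ne (hnn u₀ r x) (Ne.symm hx)
      have hPXpos : 0 < ∑ u, ∑ r', p u r' x := by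
        rcases lt_or_eq_of_le hPX0 with h | h
        · exact h
        · rw [hXR, ← h, mul_zero] at hpu; linarith
      have hkey : (∑ u, ∑ x', p u r x') * (∑ u, ∑ r', p u r' x)
          ≤ π * (∑ u, ∑ r', p u r' x) := by
        rw [← hXR]
        exact hle.trans (le_of_eq hUX)
      nlinarith [hkey, hPXpos]
    · rw [← hPr]; linarith
  refine ⟨?_, ?_, (part34 π hπ0 hπ1).1, (part34 π hπ0 hπ1).2⟩
  · exact entropy_lower (fun x : 𝒳 => ∑ u, ∑ r, p u r x) π hπ0 hπ1
      (fun x => Finset.sum_nonneg fun u _ => Finset.sum_nonneg fun r _ => hnn u r x)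
      hXle hsumX
  · exact entropy_lower (fun r : ℛ => ∑ u, ∑ x, p u r x) π hπ0 hπ1
      (fun r => Finset.sum_nonneg fun u _ => Finset.sum_nonneg fun x _ => hnn u r x)
      hRle hsumR
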